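/- Let K̃ be a compact simply connected Lie group, c an element of its center, and K = K̃/⟨c⟩. If (x,y) and (x',y') are c-pairs in K̃ (i.e., [x,y] = c = [x',y']) whose images in K define the same homomorphisms up to conjugation from Z² to K, then (x,y) and (x',y') are conjugate in K̃. More precisely, if (x,y) is conjugate to (c^a x', c^b y') for some integers a,b, then (x,y) is conjugate to (x',y'). -/

import Mathlib

private lemma conj_zpow_aux {G : Type*} [Group G] {c x y : G}
    (hc : ∀ g : G, c * g = g * c) (h : y * x * y⁻¹ = c * x) :
    ∀ n : ℤ, y ^ n * x * y ^ (-n) = c ^ n * x := by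
  have hcc : ∀ (g : G) (n : ℤ), c ^ n * g = g * c ^ n :=
    fun g n => (Commute.zpow_left (hc g) n).eq
  have pull : ∀ (u v : G) (n : ℤ), u * (c ^ n * v) = c ^ n * (u * v) := fun u v n => by
    rw [← mul_assoc, ← hcc u n, mul_assoc]
  have h' : y⁻¹ * x * y = c⁻¹ * x := by
    rw [eq_comm, inv_mul_eq_iff_eq_mul]
    conv_lhs => rw [show x = y⁻¹ * (y * x * y⁻¹) * y by group]
    rw [h, ← mul_assoc, ← hc y⁻¹, mul_assoc, mul_assoc]; group
  intro n
  induction n using Int.induction_on with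
  | zero => simp
  | succ k ih =>
    have e1 : y ^ ((k : ℤ) + 1) * x * y ^ (-((k : ℤ) + 1)) =
        y * (y ^ (k : ℤ) * x * y ^ (-(k : ℤ))) * y⁻¹ := by group
    rw [e1, ih, pull y x k, mul_assoc, h, ← mul_assoc, ← zpow_add_one]
  | pred k ih =>
    have e1 : y ^ (-(k : ℤ) - 1) * x * y ^ (-(-(k : ℤ) - 1)) =
        y⁻¹ * (y ^ (-(k : ℤ)) * x * y ^ (-(-(k : ℤ)))) * y := by group
    rw [e1, ih, pull y⁻¹ x (-k), mul_assoc, h', ← mul_assoc, ← zpow_sub_one]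

/-- Let `K̃` be a (compact simply connected) group, `c` central, and `K = K̃/⟨c⟩`.  If two
`c`-pairs `(x,y)` and `(x',y')` in `K̃` have images in `K` that are simultaneously
conjugate, then `(x,y)` and `(x',y')` are conjugate in `K̃`.  More precisely, if `(x,y)`
is conjugate to `(c^a x', c^b y')` for some integers `a, b`, then `(x,y)` is conjugate to
`(x',y')`. -/
theorem cPair_conjugacy
    {G : Type*} [Group G] (c : G) (hc : c ∈ Subgroup.center G)
    (x y x' y' : G) (hxy : x * y * x⁻¹ * y⁻¹ = c) (hxy' : x' * y' * x'⁻¹ * y'⁻¹ = c) :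
    ((∃ g : G, QuotientGroup.mk (s := Subgroup.zpowers c) (g * x * g⁻¹) =
          (QuotientGroup.mk x' : G ⧸ Subgroup.zpowers c) ∧
        QuotientGroup.mk (s := Subgroup.zpowers c) (g * y * g⁻¹) =
          (QuotientGroup.mk y' : G ⧸ Subgroup.zpowers c)) →
      ∃ g : G, g * x * g⁻¹ = x' ∧ g * y * g⁻¹ = y') ∧
    ∀ a b : ℤ, (∃ g : G, g * x * g⁻¹ = c ^ a * x' ∧ g * y * g⁻¹ = c ^ b * y') →
      ∃ g : G, g * x * g⁻¹ = x' ∧ g * y * g⁻¹ = y' := by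
  have hcg : ∀ g : G, c * g = g * c := fun g => (Subgroup.mem_center_iff.mp hc g).symm
  have hcg' : ∀ g : G, c⁻¹ * g = g * c⁻¹ := fun g => by
    rw [eq_comm, mul_inv_eq_iff_eq_mul, mul_assoc, ← hcg g, ← mul_assoc, inv_mul_cancel,
      one_mul]
  have hcc : ∀ (g : G) (n : ℤ), c ^ n * g = g * c ^ n :=
    fun g n => (Commute.zpow_left (hcg g) n).eq
  have pull : ∀ (u v : G) (n : ℤ), u * (c ^ n * v) = c ^ n * (u * v) := fun u v n => by
    rw [← mul_assoc, ← hcc u n, mul_assoc]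
  -- semiconjugation relations coming from the commutator identity
  have hA0 : y' * x' * y'⁻¹ = c⁻¹ * x' := by
    rw [eq_comm, inv_mul_eq_iff_eq_mul, ← hxy']; group
  have hx'y' : x' * y' * x'⁻¹ = c * y' := by rw [← hxy']; group
  have hB0 : x'⁻¹ * y' * (x'⁻¹)⁻¹ = c⁻¹ * y' := by
    rw [inv_inv, eq_comm, inv_mul_eq_iff_eq_mul]
    conv_lhs => rw [show y' = x'⁻¹ * (x' * y' * x'⁻¹) * x' by group]
    rw [hx'y', ← mul_assoc, ← hcg x'⁻¹, mul_assoc, mul_assoc]; group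
  have hA := conj_zpow_aux hcg' hA0
  have hB := conj_zpow_aux hcg' hB0
  -- main step: the `c`-power twisted pair is conjugate back
  have main : ∀ a b : ℤ, (∃ g : G, g * x * g⁻¹ = c ^ a * x' ∧ g * y * g⁻¹ = c ^ b * y') →
      ∃ g : G, g * x * g⁻¹ = x' ∧ g * y * g⁻¹ = y' := by
    intro a b ⟨g, hgx, hgy⟩
    set h : G := x' ^ (-b) * y' ^ a with hh
    have hconjx : h * x' * h⁻¹ = c ^ (-a) * x' := by
      have e : h * x' * h⁻¹ = x' ^ (-b) * (y' ^ a * x' * y' ^ (-a)) * x' ^ b := by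
        rw [hh]; group
      rw [e, hA a, show (c⁻¹ : G) ^ a = c ^ (-a) by rw [inv_zpow, zpow_neg],
        pull, mul_assoc]
      congr 1
      group
    have hconjy : h * y' * h⁻¹ = c ^ (-b) * y' := by
      have e : h * y' * h⁻¹ = (x'⁻¹) ^ b * y' * (x'⁻¹) ^ (-b) := by
        rw [hh]; group
      rw [e, hB b, inv_zpow, ← zpow_neg]
    refine ⟨h * g, ?_, ?_⟩
    · have e : h * g * x * (h * g)⁻¹ = h * (g * x * g⁻¹) * h⁻¹ := by group
      rw [e, hgx, pull, mul_assoc, hconjx, ← mul_assoc, ← zpow_add, add_neg_cancel,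
        zpow_zero, one_mul]
    · have e : h * g * y * (h * g)⁻¹ = h * (g * y * g⁻¹) * h⁻¹ := by group
      rw [e, hgy, pull, mul_assoc, hconjy, ← mul_assoc, ← zpow_add, add_neg_cancel,
        zpow_zero, one_mul]
  refine ⟨?_, main⟩
  rintro ⟨g, h1, h2⟩
  rw [QuotientGroup.eq] at h1 h2
  obtain ⟨m, hm⟩ := h1
  obtain ⟨n, hn⟩ := h2
  have hm2 : (g * x * g⁻¹)⁻¹ * x' = c ^ m := hm.symm
  have hn2 : (g * y * g⁻¹)⁻¹ * y' = c ^ n := hn.symm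
  refine main (-m) (-n) ⟨g, ?_, ?_⟩
  · rw [zpow_neg, eq_inv_mul_iff_mul_eq, hcc, ← hm2]; group
  · rw [zpow_neg, eq_inv_mul_iff_mul_eq, hcc, ← hn2]; group
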